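/- (Deterrence effect, Proposition 3.) Assume (θ_H − θ_L)·c_h > θ_H·v − c > 0. Define S(τ̂) = μ((0, τ̂·θ_H·z]), D(τ̂) = (θ_H − θ_L)·c_h − ∫ max(θ_H·v − c − y·S(τ̂), 0) dμ(y), and r(τ̂) = (ν × ν)({(β₁, β₂) : β₁ + β₂ < 2u/D(τ̂)}). Then for all 0 ≤ τ̂₁ ≤ τ̂₂: S(τ̂₁) ≤ S(τ̂₂), D(τ̂₁) ≤ D(τ̂₂) with both strictly positive, and r(τ̂₂) ≤ r(τ̂₁): an increase in perceived HIV transmission risk weakly raises the stigma level, which weakly widens the continuation-value gap and weakly decreases the proportion of high-risk individuals in the population. -/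

import Mathlib

open MeasureTheory

/-- The stigma level `S(τ̂) = μ((0, τ̂·θ_H·z])`. -/
noncomputable def stigma (μ : Measure ℝ) (θH z τ : ℝ) : ℝ :=
  (μ (Set.Ioc 0 (τ * θH * z))).toReal

/-- The expected continuation-value gap at perceived risk τ̂:
`D(τ̂) = (θ_H − θ_L)·c_h − ∫ max(θ_H·v − c − y·S(τ̂), 0) dμ(y)`. -/
noncomputable def gapD (μ : Measure ℝ) (θL θH v c ch z τ : ℝ) : ℝ :=
  (θH - θL) * ch - ∫ y, max (θH * v - c - y * stigma μ θH z τ) 0 ∂μ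

/-- The fraction of high-risk individuals
`r(τ̂) = (ν × ν)({β₁ + β₂ < 2u/D(τ̂)})`. -/
noncomputable def highRiskFraction (μ ν : Measure ℝ) (θL θH v c ch z u τ : ℝ) :
    ENNReal :=
  (ν.prod ν) {p : ℝ × ℝ | p.1 + p.2 < 2 * u / gapD μ θL θH v c ch z τ}

/-- Deterrence effect, Proposition 3: for `0 ≤ τ̂₁ ≤ τ̂₂`,
`S(τ̂₁) ≤ S(τ̂₂)`, the gaps `D(τ̂₁) ≤ D(τ̂₂)` are strictly positive, and
`r(τ̂₂) ≤ r(τ̂₁)`. -/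
theorem deterrence_effect
    (μ ν : Measure ℝ) [IsProbabilityMeasure μ] [IsProbabilityMeasure ν]
    (hμ : μ (Set.Ioi (0 : ℝ)) = 1) (hν : ν (Set.Ioo (0 : ℝ) 1) = 1)
    (θL θH v c ch z u : ℝ)
    (hθL : 0 < θL) (hθLH : θL < θH) (hθH : θH < 1)
    (hv : 0 < v) (hc : 0 < c)
    (hA1L : θL * v < c) (hA1H : c < θH * v)
    (hch : 0 < ch) (hz : 0 < z) (hu : 0 < u)
    (hA3 : θH * v - c < (θH - θL) * ch)
    (τ₁ τ₂ : ℝ) (hτ₁ : 0 ≤ τ₁) (hτ₁₂ : τ₁ ≤ τ₂) :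
    stigma μ θH z τ₁ ≤ stigma μ θH z τ₂ ∧
    0 < gapD μ θL θH v c ch z τ₁ ∧
    0 < gapD μ θL θH v c ch z τ₂ ∧
    gapD μ θL θH v c ch z τ₁ ≤ gapD μ θL θH v c ch z τ₂ ∧
    highRiskFraction μ ν θL θH v c ch z u τ₂
      ≤ highRiskFraction μ ν θL θH v c ch z u τ₁ := by
  have hθH0 : 0 < θH := hθL.trans hθLH
  set A := θH * v - c with hAdef
  have hA0 : 0 < A := by simp only [hAdef]; linarith
  -- a.e. positivity of y
  have hae : ∀ᵐ y ∂μ, y ∈ Set.Ioi (0:ℝ) := by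
    rw [MeasureTheory.ae_iff]
    have : μ (Set.Ioi (0:ℝ))ᶜ = 0 := by
      rw [measure_compl measurableSet_Ioi (measure_ne_top _ _), hμ, measure_univ]
      simp
    exact this
  have hSnn : ∀ τ, 0 ≤ stigma μ θH z τ := fun τ => ENNReal.toReal_nonneg
  have hSle1 : ∀ τ, stigma μ θH z τ ≤ 1 := by
    intro τ
    unfold stigma
    rw [← ENNReal.toReal_one]
    exact ENNReal.toReal_mono (by simp) (prob_le_one)
  have hSmono : stigma μ θH z τ₁ ≤ stigma μ θH z τ₂ := by
    unfold stigma
    exact ENNReal.toReal_mono (measure_ne_top μ _)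
      (measure_mono (Set.Ioc_subset_Ioc_right (mul_le_mul_of_nonneg_right (mul_le_mul_of_nonneg_right hτ₁₂ hθH0.le) hz.le)))
  -- integrability
  have hint : ∀ s : ℝ, 0 ≤ s → Integrable (fun y => max (A - y * s) 0) μ := by
    intro s hs
    apply (integrable_const A).mono'
    · exact (Continuous.max (by continuity) continuous_const).aestronglyMeasurable
    · filter_upwards [hae] with y hy
      rw [Real.norm_eq_abs, abs_of_nonneg (le_max_right _ _)]
      refine max_le ?_ hA0.le
      have : 0 ≤ y * s := mul_nonneg (le_of_lt hy) hs
      linarith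
  have hIbound : ∀ s : ℝ, 0 ≤ s → (∫ y, max (A - y * s) 0 ∂μ) ≤ A := by
    intro s hs
    calc (∫ y, max (A - y * s) 0 ∂μ) ≤ ∫ _, A ∂μ := by
          refine integral_mono_ae (hint s hs) (integrable_const A) ?_
          filter_upwards [hae] with y hy
          refine max_le ?_ hA0.le
          have : 0 ≤ y * s := mul_nonneg (le_of_lt hy) hs
          linarith
      _ = A := by simp
  have hgapPos : ∀ τ, 0 ≤ stigma μ θH z τ → 0 < gapD μ θL θH v c ch z τ := by
    intro τ hτ
    have := hIbound (stigma μ θH z τ) hτ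
    unfold gapD
    simp only [← hAdef] at hA3 ⊢
    linarith
  have hImono : (∫ y, max (A - y * stigma μ θH z τ₂) 0 ∂μ)
      ≤ ∫ y, max (A - y * stigma μ θH z τ₁) 0 ∂μ := by
    refine integral_mono_ae (hint _ (hSnn τ₂)) (hint _ (hSnn τ₁)) ?_
    filter_upwards [hae] with y hy
    refine max_le_max (sub_le_sub_left ?_ _) le_rfl
    exact mul_le_mul_of_nonneg_left hSmono (le_of_lt hy)
  have hD1 : 0 < gapD μ θL θH v c ch z τ₁ := hgapPos τ₁ (hSnn τ₁)
  have hD2 : 0 < gapD μ θL θH v c ch z τ₂ := hgapPos τ₂ (hSnn τ₂)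
  have hDmono : gapD μ θL θH v c ch z τ₁ ≤ gapD μ θL θH v c ch z τ₂ := by
    unfold gapD; simp only [← hAdef]; linarith
  refine ⟨hSmono, hD1, hD2, hDmono, ?_⟩
  unfold highRiskFraction
  apply measure_mono
  intro p hp
  simp only [Set.mem_setOf_eq] at hp ⊢
  calc p.1 + p.2 < 2 * u / gapD μ θL θH v c ch z τ₂ := hp
    _ ≤ 2 * u / gapD μ θL θH v c ch z τ₁ := by
        apply div_le_div_of_nonneg_left (by linarith) hD1 hDmono
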